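/- Let 0 ≤ ρ₁ < ρ₂ < 1, Y ∈ (0,1), and λ ∈ [0,1), and suppose the two models have the same average: λ/(1−λ) = (1−Y)·ρ₁/(1−ρ₁) + Y·ρ₂/(1−ρ₂), with λ > 0. Then there exists n ≥ 1 such that λ^n > (1−Y)·ρ₁^n + Y·ρ₂^n. (A Bernoulli model with the same average overestimates the probability of some short runs, since both tails sum to the same value while the Markov tail eventually dominates.) -/
import Mathlib

lemma geom_shift_summable {r : ℝ} (h0 : 0 ≤ r) (h1 : r < 1) :
    Summable (fun n : ℕ => r ^ (n + 1)) :=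
  ((summable_geometric_of_lt_one h0 h1).mul_left r).congr (fun n => by ring)

lemma geom_shift_tsum {r : ℝ} (h0 : 0 ≤ r) (h1 : r < 1) :
    ∑' n : ℕ, r ^ (n + 1) = r / (1 - r) := by
  calc ∑' n : ℕ, r ^ (n + 1) = ∑' n : ℕ, r * r ^ n := by
        apply tsum_congr; intro n; ring
    _ = r * (1 - r)⁻¹ := by rw [tsum_mul_left, tsum_geometric_of_lt_one h0 h1]
    _ = r / (1 - r) := (div_eq_mul_inv r (1 - r)).symm

/-- If the Bernoulli model with scoring probability `λ > 0` has the same average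
as the two-type Markov model with eigenvalues `0 ≤ ρ₁ < ρ₂ < 1` and weight
`Y ∈ (0,1)`, then for some `n ≥ 1` the Bernoulli model overestimates the
probability of a run of length `n`: `λ^n > (1-Y)ρ₁^n + Yρ₂^n`. -/
theorem bernoulli_overestimates_some_short_run (ρ₁ ρ₂ Y lam : ℝ)
    (h₁ : 0 ≤ ρ₁) (h₁₂ : ρ₁ < ρ₂) (h₂ : ρ₂ < 1)
    (hY : 0 < Y) (hY' : Y < 1) (hl : 0 < lam) (hl' : lam < 1)
    (havg : lam / (1 - lam)
      = (1 - Y) * (ρ₁ / (1 - ρ₁)) + Y * (ρ₂ / (1 - ρ₂))) :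
    ∃ n : ℕ, 1 ≤ n ∧ (1 - Y) * ρ₁ ^ n + Y * ρ₂ ^ n < lam ^ n := by
  by_contra hcon
  push_neg at hcon
  have hle : ∀ n : ℕ, lam ^ (n + 1) ≤ (1 - Y) * ρ₁ ^ (n + 1) + Y * ρ₂ ^ (n + 1) :=
    fun n => hcon (n + 1) (by omega)
  have h20 : (0 : ℝ) ≤ ρ₂ := le_trans h₁ h₁₂.le
  have h11 : ρ₁ < 1 := lt_trans h₁₂ h₂
  set g : ℕ → ℝ := fun n => (1 - Y) * ρ₁ ^ (n + 1) + Y * ρ₂ ^ (n + 1) - lam ^ (n + 1) with hg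
  have hgnn : ∀ n, 0 ≤ g n := fun n => sub_nonneg.mpr (hle n)
  have hsum : Summable g := by
    apply Summable.sub
    · exact (((geom_shift_summable h₁ h11).mul_left (1 - Y)).add
        ((geom_shift_summable h20 h₂).mul_left Y))
    · exact geom_shift_summable hl.le hl'
  have htsum : ∑' n, g n = 0 := by
    have := Summable.tsum_sub
      (((geom_shift_summable h₁ h11).mul_left (1 - Y)).add
        ((geom_shift_summable h20 h₂).mul_left Y))
      (geom_shift_summable hl.le hl')
    rw [hg]
    rw [this, Summable.tsum_add ((geom_shift_summable h₁ h11).mul_left (1 - Y))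
      ((geom_shift_summable h20 h₂).mul_left Y), tsum_mul_left, tsum_mul_left,
      geom_shift_tsum h₁ h11, geom_shift_tsum h20 h₂, geom_shift_tsum hl.le hl', havg]
    ring
  have hzero : ∀ n, g n = 0 := by
    intro n
    have := Summable.le_tsum hsum n (fun m _ => hgnn m)
    have := hgnn n
    linarith [Summable.le_tsum hsum n (fun m _ => hgnn m), htsum ▸ Summable.le_tsum hsum n (fun m _ => hgnn m)]
  have e0 : lam = (1 - Y) * ρ₁ + Y * ρ₂ := by
    have := hzero 0
    simp only [hg] at this
    norm_num at this
    linarith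
  have e1 : lam ^ 2 = (1 - Y) * ρ₁ ^ 2 + Y * ρ₂ ^ 2 := by
    have := hzero 1
    simp only [hg] at this
    norm_num at this
    linarith
  have hconv : ((1 - Y) * ρ₁ + Y * ρ₂) ^ 2 < (1 - Y) * ρ₁ ^ 2 + Y * ρ₂ ^ 2 := by
    have hd : 0 < (ρ₂ - ρ₁) ^ 2 := pow_pos (by linarith) 2
    nlinarith [mul_pos (mul_pos hY (by linarith : (0:ℝ) < 1 - Y)) hd]
  rw [e0] at e1
  linarith
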